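/- For ε = log(n)/n, the quantity (1-ε)^n · ((1+ε)^n − 1) converges to 1 as n → ∞. -/

import Mathlib

open Real Filter

-- (log n)^2 / n → 0
lemma aux_log_sq_div : Tendsto (fun n : ℕ => (Real.log n) ^ 2 / (n : ℝ)) atTop (nhds 0) := by
  have h := Real.tendsto_pow_log_div_mul_add_atTop 1 0 2 one_ne_zero
  have := h.comp tendsto_natCast_atTop_atTop (α := ℕ)
  simpa [Function.comp_def] using this

-- log n / n → 0
lemma aux_log_div : Tendsto (fun n : ℕ => Real.log n / (n : ℝ)) atTop (nhds 0) := by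
  have h := Real.tendsto_pow_log_div_mul_add_atTop 1 0 1 one_ne_zero
  have := h.comp tendsto_natCast_atTop_atTop (α := ℕ)
  simpa [Function.comp_def] using this

-- (1 - ε²)^n → 1
lemma aux_A : Tendsto (fun n : ℕ => (1 - (Real.log n / n) ^ 2) ^ n) atTop (nhds 1) := by
  have hε := aux_log_div
  have hsq : Tendsto (fun n : ℕ => (Real.log n) ^ 2 / (n : ℝ)) atTop (nhds 0) := aux_log_sq_div
  -- eventual smallness of ε
  have hev : ∀ᶠ n : ℕ in atTop, |Real.log n / n| ≤ 1/2 := by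
    have h' := hε.abs
    rw [abs_zero] at h'
    have := h'.eventually (ge_mem_nhds (by norm_num : (0:ℝ) < 1/2) : ∀ᶠ x in nhds (0:ℝ), x ≤ 1/2)
    exact this
  refine tendsto_of_tendsto_of_tendsto_of_le_of_le' (g := fun n : ℕ => 1 - n * (Real.log n / n)^2)
    (h := fun n : ℕ => Real.exp (-(n * (Real.log n / n)^2))) ?_ ?_ ?_ ?_
  · -- lower → 1
    have : Tendsto (fun n : ℕ => (n:ℝ) * (Real.log n / n)^2) atTop (nhds 0) := by
      refine hsq.congr' ?_
      filter_upwards [eventually_gt_atTop 0] with n hn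
      have hn' : (n:ℝ) ≠ 0 := by positivity
      field_simp
    have := (tendsto_const_nhds (x := (1:ℝ))).sub this
    simpa using this
  · -- upper → 1
    have : Tendsto (fun n : ℕ => (n:ℝ) * (Real.log n / n)^2) atTop (nhds 0) := by
      refine hsq.congr' ?_
      filter_upwards [eventually_gt_atTop 0] with n hn
      have hn' : (n:ℝ) ≠ 0 := by positivity
      field_simp
    have h2 := this.neg
    rw [neg_zero] at h2
    have := (Real.continuous_exp.tendsto 0).comp h2
    simpa [Function.comp_def] using this
  · -- Bernoulli lower bound
    filter_upwards [hev] with n h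
    have h1 : (-2:ℝ) ≤ -(Real.log n / n)^2 := by nlinarith [abs_nonneg (Real.log n / n), sq_abs (Real.log n / n)]
    have := one_add_mul_le_pow h1 n
    calc 1 - (n:ℝ) * (Real.log n / n)^2 = 1 + n * (-(Real.log n / n)^2) := by ring
    _ ≤ (1 + -(Real.log n / n)^2) ^ n := this
    _ = (1 - (Real.log n / n)^2) ^ n := by ring_nf
  · -- exp upper bound
    filter_upwards [hev] with n h
    have h0 : (0:ℝ) ≤ 1 - (Real.log n / n)^2 := by
      have : (Real.log n / n)^2 ≤ (1/2)^2 := by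
        rw [← sq_abs]; exact pow_le_pow_left₀ (abs_nonneg _) h 2
      nlinarith
    have h2 : 1 - (Real.log n / n)^2 ≤ Real.exp (-(Real.log n / n)^2) := by
      have := Real.add_one_le_exp (-(Real.log n / n)^2); linarith
    calc (1 - (Real.log n / n)^2) ^ n ≤ (Real.exp (-(Real.log n / n)^2)) ^ n :=
          pow_le_pow_left₀ h0 h2 n
    _ = Real.exp (-(n * (Real.log n / n)^2)) := by
          rw [← Real.exp_nat_mul]; ring_nf

-- (1 - ε)^n → 0
lemma aux_B : Tendsto (fun n : ℕ => (1 - Real.log n / n) ^ n) atTop (nhds 0) := by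
  refine tendsto_of_tendsto_of_tendsto_of_le_of_le' (g := fun _ : ℕ => (0:ℝ))
    (h := fun n : ℕ => 1 / (n:ℝ)) tendsto_const_nhds tendsto_one_div_atTop_nhds_zero_nat ?_ ?_
  · filter_upwards [eventually_ge_atTop 1] with n hn
    have hn' : (0:ℝ) < n := by exact_mod_cast hn
    have : Real.log n ≤ n - 1 := by
      have := Real.log_le_sub_one_of_pos hn'; linarith
    have h0 : (0:ℝ) ≤ 1 - Real.log n / n := by
      rw [sub_nonneg, div_le_one hn']; linarith
    positivity
  · filter_upwards [eventually_ge_atTop 1] with n hn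
    have hn' : (0:ℝ) < n := by exact_mod_cast hn
    have h0 : (0:ℝ) ≤ 1 - Real.log n / n := by
      rw [sub_nonneg, div_le_one hn']
      have := Real.log_le_sub_one_of_pos hn'; linarith
    have h1 : 1 - Real.log n / n ≤ Real.exp (-(Real.log n / n)) := by
      have := Real.add_one_le_exp (-(Real.log n / n)); linarith
    calc (1 - Real.log n / n) ^ n ≤ (Real.exp (-(Real.log n / n))) ^ n :=
          pow_le_pow_left₀ h0 h1 n
    _ = Real.exp (-(n * (Real.log n / n))) := by rw [← Real.exp_nat_mul]; ring_nf
    _ = Real.exp (-Real.log n) := by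
          congr 1; field_simp
    _ = 1 / n := by rw [Real.exp_neg, Real.exp_log hn']; ring

theorem stmt_0 :
    Filter.Tendsto
      (fun n : ℕ => (1 - Real.log n / n) ^ n * ((1 + Real.log n / n) ^ n - 1))
      Filter.atTop (nhds 1) := by
  have key : ∀ n : ℕ, (1 - Real.log n / n) ^ n * ((1 + Real.log n / n) ^ n - 1)
      = (1 - (Real.log n / n) ^ 2) ^ n - (1 - Real.log n / n) ^ n := by
    intro n
    have : (1 - Real.log n / n) * (1 + Real.log n / n) = 1 - (Real.log n / n) ^ 2 := by ring
    rw [mul_sub, mul_one, ← mul_pow, this]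
  simp only [key]
  have := aux_A.sub aux_B
  simpa using this
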